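/- Let (W₁, W₂) be a pair of independent standard Brownian motions and fix α ∈ (1,2). For δ > 0 set v = 2δ^{−α}, and for a solution (Q₁,Q₂) of the two-armed Thompson sampling limit ODE with arm gap δ define g₁(t) = √(Q₂(t)/t) and g₂(t) = −√(Q₁(t)/t)·w₂(Q₂(t))/√(Q₂(t)), where (w₁,w₂) are the driving paths. Then: (1) deterministically, for every δ > 0 and every solution (Q₁,Q₂) satisfying Q₂(v) ≥ δ^{−α}, one has δ^{−α/2} ≤ g₁(t) ≤ 1 for all t ∈ [v, 1]; and (2) almost surely there exist a constant C > 0 and a threshold δ₀ such that for every δ ≥ δ₀ and every solution (Q₁,Q₂) driven by (W₁(ω), W₂(ω)) with arm gap δ satisfying Q₂(v) ≥ δ^{−α}, one has |g₂(t)| ≤ C·√(log log δ) for all t ∈ [v, 1]. -/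

import Mathlib

open MeasureTheory ProbabilityTheory Filter Set

/-- The standard normal distribution function `Φ`. -/
noncomputable def Phi (x : ℝ) : ℝ :=
  ∫ s in Set.Iic x, (Real.sqrt (2 * Real.pi))⁻¹ * Real.exp (-s ^ 2 / 2)

/-- `W` is a standard Brownian motion under `P`: continuous sample paths, `W₀ = 0`,
Gaussian increments `W_t - W_s ~ N(0, t - s)`, and independent increments. -/
def IsStdBM {Ω : Type*} [MeasurableSpace Ω] (P : Measure Ω) (W : ℝ → Ω → ℝ) : Prop :=
  (∀ ω, Continuous fun t => W t ω) ∧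
  (∀ ω, W 0 ω = 0) ∧
  (∀ s t : ℝ, 0 ≤ s → s < t →
    Measure.map (fun ω => W t ω - W s ω) P = gaussianReal 0 (Real.toNNReal (t - s))) ∧
  (∀ (n : ℕ) (t : Fin (n + 1) → ℝ), (∀ i, 0 ≤ t i) → StrictMono t →
    iIndepFun
      (fun i : Fin n => fun ω => W (t i.succ) ω - W (t i.castSucc) ω) P)

/-- `W₁, W₂` are independent standard Brownian motions under `P`. -/
def IndepBMs {Ω : Type*} [MeasurableSpace Ω] (P : Measure Ω) (W₁ W₂ : ℝ → Ω → ℝ) : Prop :=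
  IsStdBM P W₁ ∧ IsStdBM P W₂ ∧
  IndepFun (fun ω => fun t => W₁ t ω) (fun ω => fun t => W₂ t ω) P

/-- A solution of the two-armed Thompson sampling limit ODE driven by `(w₁, w₂)`
with arm gap `δ`, unit variance and no smoothing. -/
def IsTwoArmSol (w₁ w₂ : ℝ → ℝ) (δ : ℝ) (Q₁ Q₂ : ℝ → ℝ) : Prop :=
  ContinuousOn Q₁ (Set.Icc 0 1) ∧ ContinuousOn Q₂ (Set.Icc 0 1) ∧
  MonotoneOn Q₁ (Set.Icc 0 1) ∧ MonotoneOn Q₂ (Set.Icc 0 1) ∧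
  Q₁ 0 = 0 ∧ Q₂ 0 = 0 ∧ (∀ t ∈ Set.Icc (0:ℝ) 1, Q₁ t + Q₂ t = t) ∧
  (∀ t ∈ Set.Ioc (0:ℝ) 1, 0 < Q₁ t) ∧ (∀ t ∈ Set.Ioc (0:ℝ) 1, 0 < Q₂ t) ∧
  (∀ t ∈ Set.Ioc (0:ℝ) 1,
    HasDerivWithinAt Q₁
      (Phi ((δ * Q₁ t * Q₂ t + Q₂ t * w₁ (Q₁ t) - Q₁ t * w₂ (Q₂ t)) /
        Real.sqrt (t * Q₁ t * Q₂ t))) (Set.Icc 0 1) t)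


lemma gauss_tail_Ioi {v : NNReal} (hv : 0 < (v:ℝ)) {r : ℝ} (hr : Real.sqrt v ≤ r) :
    gaussianReal 0 v (Set.Ioi r) ≤ ENNReal.ofReal (Real.exp (-r^2 / (2*v))) := by
  have hr0 : 0 < r := lt_of_lt_of_le (Real.sqrt_pos.mpr hv) hr
  have hvne : v ≠ 0 := by
    intro h; rw [h] at hv; simp at hv
  rw [ProbabilityTheory.gaussianReal_apply_eq_integral 0 hvne]
  refine ENNReal.ofReal_le_ofReal ?_
  set c : ℝ := r / v with hc
  have hcpos : 0 < c := div_pos hr0 hv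
  set g : ℝ → ℝ := fun x => (Real.sqrt (2*Real.pi*v))⁻¹ *
    (Real.exp (r^2/(2*v)) * Real.exp (-c * x)) with hg
  have hgint : IntegrableOn g (Set.Ioi r) :=
    ((exp_neg_integrableOn_Ioi r hcpos).const_mul _).const_mul _
  have hpt : ∀ x ∈ Set.Ioi r, gaussianPDFReal 0 v x ≤ g x := by
    intro x hx
    have hx' : r < x := hx
    unfold gaussianPDFReal
    rw [hg]
    have hv' : (0:ℝ) < 2*v := by positivity
    have expand : r^2/(2*(v:ℝ)) + (-c*x) = (r^2 - 2*r*x)/(2*(v:ℝ)) := by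
      rw [hc]; field_simp; ring
    have h1 : -(x - 0)^2/(2*(v:ℝ)) ≤ r^2/(2*(v:ℝ)) + (-c * x) := by
      rw [expand, div_le_div_iff_of_pos_right hv']
      nlinarith [sq_nonneg (x - r)]
    calc (Real.sqrt (2*Real.pi*v))⁻¹ * Real.exp (-(x-0)^2/(2*v))
        ≤ (Real.sqrt (2*Real.pi*v))⁻¹ * Real.exp (r^2/(2*v) + (-c*x)) := by
          exact mul_le_mul_of_nonneg_left (Real.exp_le_exp.mpr h1) (by positivity)
      _ = (Real.sqrt (2*Real.pi*v))⁻¹ * (Real.exp (r^2/(2*v)) * Real.exp (-c*x)) := by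
          rw [Real.exp_add]
  have hintexp : ∫ x in Set.Ioi r, Real.exp (-c * x) = Real.exp (-c * r) / c := by
    have hd : ∀ x ∈ Set.Ioi r, HasDerivAt (fun y => -Real.exp (-c*y)/c) (Real.exp (-c*x)) x := by
      intro x _
      have h1 : HasDerivAt (fun y : ℝ => -c*y) (-c) x := by
        simpa using (hasDerivAt_id x).const_mul (-c)
      have h2 := (h1.exp.neg).div_const c
      refine h2.congr_deriv ?_
      rw [div_eq_iff hcpos.ne']; ring
    have htend : Tendsto (fun y => -Real.exp (-c*y)/c) atTop (nhds 0) := by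
      have h1 : Tendsto (fun y : ℝ => -c*y) atTop atBot :=
        tendsto_id.const_mul_atTop_of_neg (neg_neg_iff_pos.2 hcpos)
      have h2 : Tendsto (fun y : ℝ => Real.exp (-c*y)) atTop (nhds 0) :=
        Real.tendsto_exp_atBot.comp h1
      have := (h2.neg).div_const c
      simpa using this
    have hcont : ContinuousWithinAt (fun y => -Real.exp (-c*y)/c) (Set.Ici r) r :=
      (((Real.continuous_exp.comp (continuous_const.mul continuous_id)).neg).div_const c).continuousWithinAt
    have := MeasureTheory.integral_Ioi_of_hasDerivAt_of_tendsto hcont hd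
      (exp_neg_integrableOn_Ioi r hcpos) htend
    rw [this]; ring
  have hIg : ∫ x in Set.Ioi r, g x
      = (Real.sqrt (2*Real.pi*v))⁻¹ * (Real.exp (r^2/(2*v)) * (Real.exp (-c * r) / c)) := by
    rw [hg]
    rw [MeasureTheory.integral_const_mul, MeasureTheory.integral_const_mul, hintexp]
  have hmono : ∫ x in Set.Ioi r, gaussianPDFReal 0 v x ≤ ∫ x in Set.Ioi r, g x :=
    setIntegral_mono_on ((integrable_gaussianPDFReal 0 v).restrict) hgint measurableSet_Ioi hpt
  refine le_trans hmono ?_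
  rw [hIg]
  have hval : Real.exp (r^2/(2*v)) * (Real.exp (-c * r) / c) = (v/r) * Real.exp (-r^2/(2*v)) := by
    have he : r^2/(2*(v:ℝ)) + (-c*r) = -r^2/(2*(v:ℝ)) := by
      rw [hc]; field_simp; ring
    calc Real.exp (r^2/(2*(v:ℝ))) * (Real.exp (-c*r)/c)
        = (Real.exp (r^2/(2*(v:ℝ))) * Real.exp (-c*r)) / c := (mul_div_assoc _ _ _).symm
      _ = Real.exp (-r^2/(2*(v:ℝ))) / c := by rw [← Real.exp_add, he]
      _ = ((v:ℝ)/r) * Real.exp (-r^2/(2*(v:ℝ))) := by rw [hc, div_div_eq_mul_div]; ring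
  rw [hval, ← mul_assoc]
  have hle1 : (Real.sqrt (2*Real.pi*v))⁻¹ * ((v:ℝ)/r) ≤ 1 := by
    have h1 : (v:ℝ)/r ≤ Real.sqrt v := by
      rw [div_le_iff₀ hr0]
      calc (v:ℝ) = Real.sqrt v * Real.sqrt v := (Real.mul_self_sqrt (by positivity)).symm
        _ ≤ Real.sqrt v * r := by gcongr
    have h2 : Real.sqrt (v:ℝ) ≤ Real.sqrt (2*Real.pi*v) := by
      apply Real.sqrt_le_sqrt
      nlinarith [Real.pi_gt_three, hv]
    have h3 : (Real.sqrt (2*Real.pi*v))⁻¹ ≤ (Real.sqrt (v:ℝ))⁻¹ := by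
      apply inv_anti₀ (Real.sqrt_pos.mpr hv) h2
    calc (Real.sqrt (2*Real.pi*v))⁻¹ * ((v:ℝ)/r)
        ≤ (Real.sqrt (v:ℝ))⁻¹ * Real.sqrt v := by
          apply mul_le_mul h3 h1 (by positivity) (by positivity)
      _ = 1 := inv_mul_cancel₀ (by positivity)
  nlinarith [Real.exp_pos (-r^2/(2*(v:ℝ))), hle1,
    mul_le_mul_of_nonneg_right hle1 (Real.exp_pos (-r^2/(2*(v:ℝ)))).le]
lemma gauss_tail_abs {v : NNReal} (hv : 0 < (v:ℝ)) {r : ℝ} (hr : Real.sqrt v ≤ r) :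
    gaussianReal 0 v {x : ℝ | r < |x|} ≤ ENNReal.ofReal (2 * Real.exp (-r^2 / (2*v))) := by
  have hsub : {x : ℝ | r < |x|} ⊆ Set.Ioi r ∪ (fun x : ℝ => -x) ⁻¹' (Set.Ioi r) := by
    intro x hx
    have hx' : r < |x| := hx
    rcases lt_abs.mp hx' with h | h
    · exact Or.inl h
    · exact Or.inr h
  have hneg : gaussianReal 0 v ((fun x:ℝ => -x) ⁻¹' (Set.Ioi r)) = gaussianReal 0 v (Set.Ioi r) := by
    have hmap := ProbabilityTheory.gaussianReal_map_const_mul (μ := 0) (v := v) (-1)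
    have hv' : (NNReal.mk ((-1:ℝ)^2) (sq_nonneg _) * v : NNReal) = v := by
      exact NNReal.eq (by simp)
    rw [hv'] at hmap
    have : (gaussianReal 0 v).map ((-1 : ℝ) * ·) (Set.Ioi r) = gaussianReal 0 v (Set.Ioi r) := by
      rw [hmap]; norm_num
    rw [Measure.map_apply (by fun_prop) measurableSet_Ioi] at this
    rw [← this]
    congr 1
    ext x
    simp
  calc gaussianReal 0 v {x : ℝ | r < |x|}
      ≤ gaussianReal 0 v (Set.Ioi r) + gaussianReal 0 v ((fun x:ℝ => -x) ⁻¹' (Set.Ioi r)) :=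
        le_trans (measure_mono hsub) (measure_union_le _ _)
    _ = gaussianReal 0 v (Set.Ioi r) + gaussianReal 0 v (Set.Ioi r) := by rw [hneg]
    _ ≤ ENNReal.ofReal (Real.exp (-r^2/(2*v))) + ENNReal.ofReal (Real.exp (-r^2/(2*v))) := by
        have := gauss_tail_Ioi hv hr
        exact add_le_add this this
    _ = ENNReal.ofReal (2 * Real.exp (-r^2/(2*v))) := by
        rw [← ENNReal.ofReal_add (by positivity) (by positivity)]; ring_nf

lemma bm_tail {Ω : Type*} [MeasurableSpace Ω] {P : Measure Ω} {W : ℝ → Ω → ℝ}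
    (hmap : ∀ s t : ℝ, 0 ≤ s → s < t →
      Measure.map (fun ω => W t ω - W s ω) P = gaussianReal 0 (Real.toNNReal (t - s)))
    {s t r : ℝ} (hs : 0 ≤ s) (hst : s < t) (hr : Real.sqrt (t - s) ≤ r) :
    P {ω | r < |W t ω - W s ω|} ≤ ENNReal.ofReal (2 * Real.exp (-r^2 / (2*(t-s)))) := by
  have hts : 0 < t - s := sub_pos.mpr hst
  have hco : ((Real.toNNReal (t - s) : NNReal) : ℝ) = t - s := Real.coe_toNNReal _ hts.le
  have hmap' := hmap s t hs hst
  have hAE : AEMeasurable (fun ω => W t ω - W s ω) P := by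
    by_contra h
    rw [Measure.map_of_not_aemeasurable h] at hmap'
    exact (IsProbabilityMeasure.ne_zero (gaussianReal 0 (Real.toNNReal (t - s)))) hmap'.symm
  have hset : MeasurableSet {x : ℝ | r < |x|} := by
    have : {x : ℝ | r < |x|} = Set.Ioi r ∪ (fun x:ℝ => -x) ⁻¹' (Set.Ioi r) := by
      ext x; simp only [Set.mem_setOf_eq, lt_abs, Set.mem_union, Set.mem_preimage, Set.mem_Ioi]
    rw [this]
    exact (measurableSet_Ioi.union (measurableSet_Ioi.preimage (by fun_prop)))
  have heq : P {ω | r < |W t ω - W s ω|}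
      = gaussianReal 0 (Real.toNNReal (t - s)) {x : ℝ | r < |x|} := by
    rw [← hmap', Measure.map_apply_of_aemeasurable hAE hset]
    rfl
  rw [heq]
  have := gauss_tail_abs (v := Real.toNNReal (t - s)) (by rw [hco]; exact hts)
    (r := r) (by rw [hco]; exact hr)
  rwa [hco] at this
lemma q_facts : (0:ℝ) < (Real.sqrt (Real.sqrt 2))⁻¹ ∧ (Real.sqrt (Real.sqrt 2))⁻¹ ≤ 6/7 ∧
    ((Real.sqrt (Real.sqrt 2))⁻¹)^2 = (Real.sqrt 2)⁻¹ ∧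
    ((Real.sqrt (Real.sqrt 2))⁻¹)^4 = 1/2 := by
  have h2 : (0:ℝ) < Real.sqrt 2 := Real.sqrt_pos.mpr two_pos
  have h4 : (0:ℝ) < Real.sqrt (Real.sqrt 2) := Real.sqrt_pos.mpr h2
  have hq2 : ((Real.sqrt (Real.sqrt 2))⁻¹)^2 = (Real.sqrt 2)⁻¹ := by
    rw [inv_pow, Real.sq_sqrt h2.le]
  have hq4 : ((Real.sqrt (Real.sqrt 2))⁻¹)^4 = 1/2 := by
    have : ((Real.sqrt (Real.sqrt 2))⁻¹)^4 = (((Real.sqrt (Real.sqrt 2))⁻¹)^2)^2 := by ring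
    rw [this, hq2, inv_pow, Real.sq_sqrt two_pos.le]
    norm_num
  refine ⟨by positivity, ?_, hq2, hq4⟩
  have h67 : (0:ℝ) ≤ 6/7 := by norm_num
  apply le_of_pow_le_pow_left₀ (n := 4) (by norm_num) h67
  rw [hq4]; norm_num

lemma chain_det {f : ℝ → ℝ} (hf : Continuous f) (hf0 : f 0 = 0) {u B : ℝ} (hu : 0 < u)
    (hB : 0 ≤ B)
    (H : ∀ j m : ℕ, m < 2^(j+1) →
      |f ((m+1) * (u / 2^(j+1))) - f (m * (u / 2^(j+1)))|
        ≤ B * Real.sqrt u * ((Real.sqrt (Real.sqrt 2))⁻¹) ^ (j+1)) :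
    ∀ s, 0 ≤ s → s < u → |f s| ≤ 6 * B * Real.sqrt u := by
  obtain ⟨hq0, hq67, hq2, hq4⟩ := q_facts
  set q : ℝ := (Real.sqrt (Real.sqrt 2))⁻¹ with hqdef
  have hq1 : q < 1 := lt_of_le_of_lt hq67 (by norm_num)
  intro s hs0 hsu
  set a : ℕ → ℕ := fun j => ⌊s * 2^j / u⌋₊ with ha
  have hfl : ∀ j, (a j : ℝ) ≤ s * 2^j / u := fun j => Nat.floor_le (by positivity)
  have hfl' : ∀ j, s * 2^j / u < a j + 1 := fun j => Nat.lt_floor_add_one _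
  have han : ∀ j, a j < 2^j := by
    intro j
    have : s * 2^j / u < 2^j := by
      rw [div_lt_iff₀ hu]
      calc s * 2^j < u * 2^j := by gcongr
        _ = 2^j * u := mul_comm _ _
    rw [ha]
    apply (Nat.floor_lt (by positivity)).mpr
    push_cast
    exact this
  set p : ℕ → ℝ := fun j => a j * (u / 2^j) with hp
  have hp_le : ∀ j, p j ≤ s := by
    intro j
    calc (a j : ℝ) * (u / 2^j) ≤ (s * 2^j / u) * (u / 2^j) := by gcongr; exact hfl j
      _ = s := by field_simp
  have hp_lb : ∀ j, s - u/2^j ≤ p j := by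
    intro j
    have h := hfl' j
    have : s < (a j + 1) * (u / 2^j) := by
      calc s = (s * 2^j / u) * (u / 2^j) := by field_simp
        _ < (a j + 1) * (u / 2^j) := by gcongr
    have hexp : ((a j : ℝ) + 1) * (u / 2^j) = p j + u/2^j := by rw [hp]; ring
    linarith [hexp ▸ this]
  have hp0 : p 0 = 0 := by
    have : a 0 = 0 := by
      apply Nat.floor_eq_zero.mpr
      rw [pow_zero, mul_one, div_lt_one hu]
      exact hsu
    simp [hp, this]
  have hdich : ∀ j, a (j+1) = 2 * a j ∨ a (j+1) = 2 * a j + 1 := by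
    intro j
    have hlow : 2 * a j ≤ a (j+1) := by
      apply Nat.le_floor
      push_cast
      calc (2:ℝ) * a j ≤ 2 * (s * 2^j / u) := by gcongr; exact hfl j
        _ = s * 2^(j+1) / u := by rw [pow_succ]; ring
    have hhigh : a (j+1) < 2 * a j + 2 := by
      have : s * 2^(j+1) / u < 2 * a j + 2 := by
        calc s * 2^(j+1) / u = 2 * (s * 2^j / u) := by rw [pow_succ]; ring
          _ < 2 * (a j + 1) := by linarith [hfl' j]
          _ = 2 * a j + 2 := by ring
      rw [ha]
      apply (Nat.floor_lt (by positivity)).mpr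
      push_cast
      exact this
    omega
  have hstep : ∀ j, |f (p (j+1)) - f (p j)| ≤ B * Real.sqrt u * q ^ (j+1) := by
    intro j
    have hpj : p j = (2 * a j : ℕ) * (u / 2^(j+1)) := by
      simp only [hp]
      push_cast
      ring
    rcases hdich j with h | h
    · have e : p (j+1) = p j := by
        simp only [hp]
        rw [h]
        push_cast
        ring
      rw [e, sub_self, abs_zero]
      positivity
    · have hm : 2 * a j < 2^(j+1) := by
        have := han (j+1)
        omega
      have hpj1 : p (j+1) = ((2 * a j : ℕ) + 1) * (u / 2^(j+1)) := by
        simp only [hp]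
        rw [h]
        push_cast
        ring
      rw [hpj1, hpj]
      exact H j (2 * a j) hm
  have hgeom : ∀ n, ∑ j ∈ Finset.range n, B * Real.sqrt u * q ^ (j+1) ≤ 6 * B * Real.sqrt u := by
    intro n
    have hsum : ∑ j ∈ Finset.range n, q ^ (j+1) ≤ 6 := by
      have h1 : ∑ j ∈ Finset.range n, q ^ (j+1) = q * ∑ j ∈ Finset.range n, q ^ j := by
        rw [Finset.mul_sum]
        congr 1
        ext j
        rw [pow_succ]; ring
      have hne : q - 1 ≠ 0 := by linarith
      have hne2 : (1:ℝ) - q ≠ 0 := by linarith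
      have h2 : ∑ j ∈ Finset.range n, q ^ j ≤ 1/(1-q) := by
        rw [geom_sum_eq (ne_of_lt hq1) n,
          show (q^n - 1)/(q - 1) = (1 - q^n)/(1-q) by field_simp; ring]
        rw [div_le_div_iff_of_pos_right (by linarith)]
        nlinarith [pow_nonneg hq0.le n]
      calc ∑ j ∈ Finset.range n, q ^ (j+1) = q * ∑ j ∈ Finset.range n, q ^ j := h1
        _ ≤ q * (1/(1-q)) := mul_le_mul_of_nonneg_left h2 hq0.le
        _ ≤ 6 := by
            rw [mul_one_div, div_le_iff₀ (by linarith)]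
            nlinarith
    calc ∑ j ∈ Finset.range n, B * Real.sqrt u * q ^ (j+1)
        = B * Real.sqrt u * ∑ j ∈ Finset.range n, q ^ (j+1) := by rw [Finset.mul_sum]
      _ ≤ B * Real.sqrt u * 6 := by
          apply mul_le_mul_of_nonneg_left hsum (by positivity)
      _ = 6 * B * Real.sqrt u := by ring
  have hpart : ∀ n, |f (p n)| ≤ 6 * B * Real.sqrt u := by
    intro n
    have htel : f (p n) - f (p 0) = ∑ j ∈ Finset.range n, (f (p (j+1)) - f (p j)) :=
      (Finset.sum_range_sub (fun j => f (p j)) n).symm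
    have : |f (p n)| = |∑ j ∈ Finset.range n, (f (p (j+1)) - f (p j))| := by
      rw [← htel, hp0, hf0, sub_zero]
    rw [this]
    calc |∑ j ∈ Finset.range n, (f (p (j+1)) - f (p j))|
        ≤ ∑ j ∈ Finset.range n, |f (p (j+1)) - f (p j)| := Finset.abs_sum_le_sum_abs _ _
      _ ≤ ∑ j ∈ Finset.range n, B * Real.sqrt u * q ^ (j+1) := Finset.sum_le_sum (fun j _ => hstep j)
      _ ≤ 6 * B * Real.sqrt u := hgeom n
  have htendp : Tendsto p atTop (nhds s) := by
    have hlow : Tendsto (fun n : ℕ => s - u * (1/2)^n) atTop (nhds s) := by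
      have h1 : Tendsto (fun n : ℕ => ((1:ℝ)/2)^n) atTop (nhds 0) :=
        tendsto_pow_atTop_nhds_zero_of_lt_one (by norm_num) (by norm_num)
      have h2 : Tendsto (fun n : ℕ => u * (1/2)^n) atTop (nhds 0) := by
        simpa using h1.const_mul u
      have h3 := Tendsto.sub (tendsto_const_nhds : Tendsto (fun _ : ℕ => s) atTop (nhds s)) h2
      simpa using h3
    apply tendsto_of_tendsto_of_tendsto_of_le_of_le hlow tendsto_const_nhds
    · intro n
      have := hp_lb n
      have heq : u / 2^n = u * (1/2)^n := by rw [div_pow, one_pow]; ring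
      linarith [heq ▸ this]
    · intro n; exact hp_le n
  have habs : Tendsto (fun n => |f (p n)|) atTop (nhds |f s|) :=
    ((hf.tendsto s).comp htendp).abs
  exact le_of_tendsto' habs hpart
lemma chain_prob {Ω : Type*} [MeasurableSpace Ω] {P : Measure Ω} {W : ℝ → Ω → ℝ}
    (hcont : ∀ ω, Continuous fun t => W t ω) (h0 : ∀ ω, W 0 ω = 0)
    (hmap : ∀ s t : ℝ, 0 ≤ s → s < t →
      Measure.map (fun ω => W t ω - W s ω) P = gaussianReal 0 (Real.toNNReal (t - s)))
    {u B : ℝ} (hu : 0 < u) (hB : 3 ≤ B) :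
    P {ω | ∃ s, 0 ≤ s ∧ s < u ∧ 6 * B * Real.sqrt u < |W s ω|}
      ≤ ENNReal.ofReal (4 * Real.exp (-B^2/2)) := by
  obtain ⟨hq0, hq67, hq2, hq4⟩ := q_facts
  set q : ℝ := (Real.sqrt (Real.sqrt 2))⁻¹ with hqdef
  have hB0 : (0:ℝ) < B := lt_of_lt_of_le (by norm_num) hB
  have hc0 : (0:ℝ) < Real.sqrt 2 := Real.sqrt_pos.mpr two_pos
  set Bad : ℕ → ℕ → Set Ω := fun j m =>
    {ω | B * Real.sqrt u * q^(j+1) <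
      |W ((m+1) * (u / 2^(j+1))) ω - W (m * (u / 2^(j+1))) ω|} with hBad
  have hsub : {ω | ∃ s, 0 ≤ s ∧ s < u ∧ 6 * B * Real.sqrt u < |W s ω|}
      ⊆ ⋃ j, ⋃ m ∈ Finset.range (2^(j+1)), Bad j m := by
    intro ω hω
    obtain ⟨s, hs0, hsu, hgt⟩ := hω
    by_contra hG
    simp only [Set.mem_iUnion, not_exists, Finset.mem_range] at hG
    have hbound := chain_det (hcont ω) (h0 ω) hu (by linarith : (0:ℝ) ≤ B)
      (fun j m hm => not_lt.mp (hG j m hm)) s hs0 hsu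
    exact absurd hbound (not_le.mpr hgt)
  have hBadle : ∀ j m : ℕ, m < 2^(j+1) →
      P (Bad j m) ≤ ENNReal.ofReal (2 * Real.exp (-(B^2 * Real.sqrt 2 ^(j+1))/2)) := by
    intro j m hm
    have hlen : (0:ℝ) < u / 2^(j+1) := by positivity
    have hst : (m:ℝ) * (u / 2^(j+1)) < ((m:ℝ)+1) * (u / 2^(j+1)) := by nlinarith
    have hdiff : ((m:ℝ)+1) * (u / 2^(j+1)) - (m:ℝ) * (u / 2^(j+1)) = u / 2^(j+1) := by ring
    have hqpow : (0:ℝ) < q^(j+1) := pow_pos hq0 _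
    have hsqle : Real.sqrt (u / 2^(j+1)) ≤ B * Real.sqrt u * q^(j+1) := by
      have e1 : u / 2^(j+1) = u * ((q^(j+1))^2)^2 := by
        have : ((q^(j+1))^2)^2 = (q^4)^(j+1) := by ring
        rw [this, hq4, div_pow, one_pow, mul_one_div]
      rw [e1, Real.sqrt_mul hu.le, Real.sqrt_sq (by positivity)]
      have hqle1 : (q^(j+1))^2 ≤ q^(j+1) := by
        nlinarith [pow_le_one₀ hq0.le (le_of_lt (lt_of_le_of_lt hq67 (by norm_num))) (n := j+1)]
      calc Real.sqrt u * (q^(j+1))^2 ≤ Real.sqrt u * q^(j+1) := by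
            apply mul_le_mul_of_nonneg_left hqle1 (Real.sqrt_nonneg u)
        _ = 1 * (Real.sqrt u * q^(j+1)) := (one_mul _).symm
        _ ≤ B * (Real.sqrt u * q^(j+1)) := by
            apply mul_le_mul_of_nonneg_right (by linarith) (by positivity)
        _ = B * Real.sqrt u * q^(j+1) := by ring
    have htail := bm_tail hmap (r := B * Real.sqrt u * q^(j+1))
      (by positivity : (0:ℝ) ≤ (m:ℝ) * (u / 2^(j+1))) hst
      (by rw [hdiff]; exact hsqle)
    rw [hdiff] at htail
    have hexpeq : (B * Real.sqrt u * q^(j+1))^2 / (2*(u/2^(j+1)))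
        = B^2 * Real.sqrt 2 ^(j+1) / 2 := by
      have h2 : Real.sqrt 2 ^(j+1) * Real.sqrt 2 ^(j+1) = 2^(j+1) := by
        rw [← mul_pow, Real.mul_self_sqrt two_pos.le]
      have e : (q^(j+1))^2 = ((Real.sqrt 2)^(j+1))⁻¹ := by
        rw [show (q^(j+1))^2 = (q^2)^(j+1) by ring, hq2, inv_pow]
      have h4 : ((Real.sqrt 2)^(j+1))⁻¹ * 2^(j+1) = (Real.sqrt 2)^(j+1) := by
        rw [← h2]
        field_simp
      rw [mul_pow, mul_pow, Real.sq_sqrt hu.le, e]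
      calc B^2 * u * ((Real.sqrt 2)^(j+1))⁻¹ / (2*(u/2^(j+1)))
          = B^2 * (((Real.sqrt 2)^(j+1))⁻¹ * 2^(j+1)) / 2 := by
            field_simp
        _ = B^2 * (Real.sqrt 2)^(j+1) / 2 := by rw [h4]
    have hneg : -(B * Real.sqrt u * q^(j+1))^2 / (2*(u/2^(j+1)))
        = -(B^2 * Real.sqrt 2 ^(j+1)) / 2 := by
      rw [neg_div, hexpeq, neg_div]
    rw [hneg] at htail
    exact htail
  have hterm : ∀ j : ℕ, (2:ℝ)^(j+1) * (2 * Real.exp (-(B^2 * Real.sqrt 2 ^(j+1))/2))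
      ≤ 2 * Real.exp (-B^2/2) * (2/3:ℝ)^(j+1) := by
    intro j
    set n := j+1 with hn
    have hsqrt2 : (5/4:ℝ) ≤ Real.sqrt 2 := by
      rw [show (5/4:ℝ) = Real.sqrt ((5/4)^2) from (Real.sqrt_sq (by norm_num)).symm]
      apply Real.sqrt_le_sqrt; norm_num
    have hpow : 1 + (n:ℝ)/4 ≤ Real.sqrt 2 ^ n := by
      have hb := one_add_mul_le_pow (a := Real.sqrt 2 - 1) (by nlinarith) n
      rw [show (1 + (Real.sqrt 2 - 1)) = Real.sqrt 2 by ring] at hb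
      have h5 : (n:ℝ)/4 ≤ (n:ℝ)*(Real.sqrt 2 - 1) := by
        rw [div_eq_mul_one_div]
        apply mul_le_mul_of_nonneg_left (by nlinarith) ((Nat.cast_nonneg n : (0:ℝ) ≤ n))
      linarith
    have hexp3 : (3:ℝ) ≤ Real.exp (9/8) := by
      have h1 := Real.exp_one_gt_d9
      have h2 : Real.exp (9/8:ℝ) = Real.exp 1 * Real.exp (1/8) := by
        rw [← Real.exp_add]; norm_num
      have h3 : (1:ℝ) + 1/8 ≤ Real.exp (1/8) := by
        have := Real.add_one_le_exp (1/8:ℝ); linarith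
      nlinarith [Real.exp_pos (1/8:ℝ)]
    have hsplit : -(B^2 * Real.sqrt 2 ^ n)/2 ≤ -B^2/2 + -(9*(n:ℝ)/8) := by
      have hB2 : (9:ℝ) ≤ B^2 := by nlinarith
      have h1 : (n:ℝ)/4 ≤ Real.sqrt 2 ^ n - 1 := by linarith
      nlinarith [(Nat.cast_nonneg n : (0:ℝ) ≤ n)]
    have hexple : Real.exp (-(B^2 * Real.sqrt 2 ^ n)/2)
        ≤ Real.exp (-B^2/2) * (1/3:ℝ)^n :=
      calc Real.exp (-(B^2 * Real.sqrt 2 ^ n)/2) ≤ Real.exp (-B^2/2 + -(9*(n:ℝ)/8)) :=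
            Real.exp_le_exp.mpr hsplit
        _ = Real.exp (-B^2/2) * Real.exp (-(9/8:ℝ)) ^ n := by
            rw [Real.exp_add, show (-(9*(n:ℝ)/8)) = ((n:ℕ):ℝ) * (-(9/8:ℝ)) by push_cast; ring,
              Real.exp_nat_mul]
        _ ≤ Real.exp (-B^2/2) * (1/3:ℝ)^n := by
            apply mul_le_mul_of_nonneg_left _ (Real.exp_pos _).le
            apply pow_le_pow_left₀ (Real.exp_pos _).le
            rw [Real.exp_neg, show (1/3:ℝ) = (3:ℝ)⁻¹ by norm_num]
            exact inv_anti₀ (by norm_num) hexp3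
    calc (2:ℝ)^n * (2*Real.exp (-(B^2 * Real.sqrt 2 ^ n)/2))
        ≤ (2:ℝ)^n * (2*(Real.exp (-B^2/2) * (1/3)^n)) := by
          apply mul_le_mul_of_nonneg_left (by linarith) (by positivity)
      _ = 2*Real.exp (-B^2/2) * (2/3:ℝ)^n := by
          rw [show (2/3:ℝ) = 2*(1/3) by norm_num, mul_pow]
          ring
  have hs0 : Summable (fun j:ℕ => (2*Real.exp (-B^2/2)*(2/3)) * (2/3:ℝ)^j) :=
    (summable_geometric_of_lt_one (by norm_num) (by norm_num)).mul_left _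
  have hsummable : Summable (fun j : ℕ => 2 * Real.exp (-B^2/2) * (2/3:ℝ)^(j+1)) :=
    hs0.congr (fun j => by rw [pow_succ]; ring)
  have htsum : ∑' j : ℕ, (2 * Real.exp (-B^2/2) * (2/3:ℝ)^(j+1)) = 4 * Real.exp (-B^2/2) := by
    rw [tsum_congr (fun j : ℕ => by rw [pow_succ]; ring :
      ∀ j : ℕ, 2 * Real.exp (-B^2/2) * (2/3:ℝ)^(j+1)
        = (2*Real.exp (-B^2/2)*(2/3)) * (2/3:ℝ)^j)]
    rw [tsum_mul_left, tsum_geometric_of_lt_one (by norm_num) (by norm_num)]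
    norm_num
    ring
  calc P {ω | ∃ s, 0 ≤ s ∧ s < u ∧ 6 * B * Real.sqrt u < |W s ω|}
      ≤ P (⋃ j, ⋃ m ∈ Finset.range (2^(j+1)), Bad j m) := measure_mono hsub
    _ ≤ ∑' j : ℕ, P (⋃ m ∈ Finset.range (2^(j+1)), Bad j m) := measure_iUnion_le _
    _ ≤ ∑' j : ℕ, ENNReal.ofReal (2 * Real.exp (-B^2/2) * (2/3:ℝ)^(j+1)) := by
        apply ENNReal.tsum_le_tsum
        intro j
        calc P (⋃ m ∈ Finset.range (2^(j+1)), Bad j m)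
            ≤ ∑ m ∈ Finset.range (2^(j+1)), P (Bad j m) := measure_biUnion_finset_le _ _
          _ ≤ ∑ m ∈ Finset.range (2^(j+1)),
              ENNReal.ofReal (2 * Real.exp (-(B^2 * Real.sqrt 2 ^(j+1))/2)) :=
              Finset.sum_le_sum (fun m hm => hBadle j m (Finset.mem_range.mp hm))
          _ = (2^(j+1) : ℕ) * ENNReal.ofReal (2 * Real.exp (-(B^2 * Real.sqrt 2 ^(j+1))/2)) := by
              rw [Finset.sum_const, Finset.card_range, nsmul_eq_mul]
          _ = ENNReal.ofReal ((2:ℝ)^(j+1) * (2 * Real.exp (-(B^2 * Real.sqrt 2 ^(j+1))/2))) := by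
              rw [ENNReal.ofReal_mul (by positivity : (0:ℝ) ≤ (2:ℝ)^(j+1))]
              congr 1
              rw [show ((2:ℝ)^(j+1)) = (((2^(j+1):ℕ) : ℝ)) by push_cast; ring,
                ENNReal.ofReal_natCast]
          _ ≤ ENNReal.ofReal (2 * Real.exp (-B^2/2) * (2/3:ℝ)^(j+1)) :=
              ENNReal.ofReal_le_ofReal (hterm j)
    _ = ENNReal.ofReal (4 * Real.exp (-B^2/2)) := by
        rw [← ENNReal.ofReal_tsum_of_nonneg (fun j => by positivity) hsummable, htsum]
lemma good_ae {Ω : Type*} [MeasurableSpace Ω] {P : Measure Ω} {W : ℝ → Ω → ℝ}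
    (hcont : ∀ ω, Continuous fun t => W t ω) (h0 : ∀ ω, W 0 ω = 0)
    (hmap : ∀ s t : ℝ, 0 ≤ s → s < t →
      Measure.map (fun ω => W t ω - W s ω) P = gaussianReal 0 (Real.toNNReal (t - s))) :
    ∀ᵐ ω ∂P, ∃ C > (0:ℝ), ∀ (k : ℕ) (s : ℝ), 0 ≤ s → s < 2/2^k →
      |W s ω| ≤ C * Real.sqrt (2/2^k) * Real.sqrt (Real.log ((k:ℝ)+2)) := by
  set u : ℕ → ℝ := fun k => 2/2^k with hu
  set B : ℕ → ℝ := fun k => 3 + 3 * Real.sqrt (Real.log ((k:ℝ)+2)) with hB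
  set F : ℕ → Set Ω := fun k =>
    {ω | ∃ s, 0 ≤ s ∧ s < u k ∧ 6 * B k * Real.sqrt (u k) < |W s ω|} with hF
  clear_value u B F
  have hupos : ∀ k : ℕ, 0 < u k := by
    intro k; rw [hu]; positivity
  have hule : ∀ k : ℕ, u k ≤ 2 := by
    intro k
    rw [hu]
    simp only
    rw [div_le_iff₀ (by positivity)]
    have h1 : (1:ℝ) ≤ 2^k := by
      calc (1:ℝ) = 1^k := (one_pow k).symm
        _ ≤ 2^k := pow_le_pow_left₀ (by norm_num) (by norm_num) k
    linarith
  have hlogk : ∀ k : ℕ, Real.log 2 ≤ Real.log ((k:ℝ)+2) := by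
    intro k
    apply Real.log_le_log (by norm_num)
    have : (0:ℝ) ≤ (k:ℝ) := Nat.cast_nonneg k
    linarith
  have hlogpos : ∀ k : ℕ, (0:ℝ) < Real.log ((k:ℝ)+2) := by
    intro k
    calc (0:ℝ) < Real.log 2 := Real.log_pos (by norm_num)
      _ ≤ _ := hlogk k
  have hsq911 : ∀ k : ℕ, (9:ℝ)/11 ≤ Real.sqrt (Real.log ((k:ℝ)+2)) := by
    intro k
    rw [show (9:ℝ)/11 = Real.sqrt ((9/11)^2) from (Real.sqrt_sq (by norm_num)).symm]
    apply Real.sqrt_le_sqrt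
    have := Real.log_two_gt_d9
    calc ((9:ℝ)/11)^2 ≤ Real.log 2 := by nlinarith
      _ ≤ _ := hlogk k
  have hBval : ∀ k : ℕ, B k = 3 + 3 * Real.sqrt (Real.log ((k:ℝ)+2)) := by
    intro k; rw [hB]
  have hFk : ∀ k : ℕ, P (F k) ≤ ENNReal.ofReal (4 * ((((k:ℝ)+2) * ((k:ℝ)+2))⁻¹)) := by
    intro k
    have hBk : 3 ≤ B k := by
      rw [hBval k]
      have := Real.sqrt_nonneg (Real.log ((k:ℝ)+2))
      linarith
    have h1 := chain_prob hcont h0 hmap (u := u k) (hupos k) hBk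
    simp only [hF]
    refine le_trans h1 (ENNReal.ofReal_le_ofReal ?_)
    have hBk2 : 4 * Real.log ((k:ℝ)+2) ≤ (B k)^2 := by
      rw [hBval k]
      have hs := Real.sq_sqrt (hlogpos k).le
      nlinarith [Real.sqrt_nonneg (Real.log ((k:ℝ)+2)), hlogpos k]
    have hexp : Real.exp (-(B k)^2/2) ≤ (((k:ℝ)+2) * ((k:ℝ)+2))⁻¹ := by
      have h2 : Real.exp (-(B k)^2/2) ≤ Real.exp (-(2 * Real.log ((k:ℝ)+2))) := by
        apply Real.exp_le_exp.mpr
        linarith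
      refine le_trans h2 ?_
      rw [show -(2 * Real.log ((k:ℝ)+2)) = -(Real.log ((k:ℝ)+2) + Real.log ((k:ℝ)+2)) by ring,
        Real.exp_neg, Real.exp_add, Real.exp_log (by positivity)]
    linarith
  have hsummable : Summable (fun k : ℕ => 4 * ((((k:ℝ)+2) * ((k:ℝ)+2))⁻¹)) := by
    have h1 : Summable (fun n : ℕ => 1/(n:ℝ)^2) :=
      Real.summable_one_div_nat_pow.mpr one_lt_two
    have h2 := (summable_nat_add_iff 2).mpr h1
    exact (h2.mul_left 4).congr (fun n => by push_cast; field_simp)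
  have hsum : ∑' k : ℕ, P (F k) ≠ ⊤ := by
    apply ne_of_lt
    calc ∑' k : ℕ, P (F k)
        ≤ ∑' k : ℕ, ENNReal.ofReal (4 * ((((k:ℝ)+2) * ((k:ℝ)+2))⁻¹)) :=
          ENNReal.tsum_le_tsum hFk
      _ = ENNReal.ofReal (∑' k : ℕ, 4 * ((((k:ℝ)+2) * ((k:ℝ)+2))⁻¹)) :=
          (ENNReal.ofReal_tsum_of_nonneg (fun k => by positivity) hsummable).symm
      _ < ⊤ := ENNReal.ofReal_lt_top
  filter_upwards [MeasureTheory.ae_finite_setOf_mem hsum] with ω hfin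
  obtain ⟨K, hK⟩ := hfin.bddAbove
  have hgood : ∀ k, K < k → ∀ s, 0 ≤ s → s < u k → |W s ω| ≤ 6 * B k * Real.sqrt (u k) := by
    intro k hk s h1 h2
    by_contra h
    push_neg at h
    have hmem : ω ∈ F k := by
      rw [hF]
      exact ⟨s, h1, h2, h⟩
    exact absurd (hK hmem) (not_le.mpr hk)
  obtain ⟨M, hM⟩ := (isCompact_Icc : IsCompact (Set.Icc (0:ℝ) 2)).exists_bound_of_continuousOn
    ((hcont ω).continuousOn)
  have hM0 : 0 ≤ M := by
    have := hM 0 (by norm_num)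
    rw [h0 ω] at this
    simpa using this
  refine ⟨max 40 ((M+1) * 2^(K+1)), lt_of_lt_of_le (by norm_num) (le_max_left _ _), ?_⟩
  intro k s hs0 hsk
  set C := max 40 ((M+1) * 2^(K+1)) with hC
  clear_value C
  have hC40 : (40:ℝ) ≤ C := hC ▸ le_max_left _ _
  have hCM : (M+1) * 2^(K+1) ≤ C := hC ▸ le_max_right _ _
  have hsk' : s < u k := by rw [hu]; exact hsk
  have hgoal : |W s ω| ≤ C * Real.sqrt (u k) * Real.sqrt (Real.log ((k:ℝ)+2)) → 
      |W s ω| ≤ C * Real.sqrt (2/2^k) * Real.sqrt (Real.log ((k:ℝ)+2)) := by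
    rw [hu]
    exact id
  apply hgoal
  rcases lt_or_ge K k with hk | hk
  · have h1 := hgood k hk s hs0 hsk'
    have hL := hsq911 k
    have hsqu : (0:ℝ) ≤ Real.sqrt (u k) := Real.sqrt_nonneg _
    have h3 : 6 * B k ≤ C * Real.sqrt (Real.log ((k:ℝ)+2)) := by
      rw [hBval k]
      have h40 : 18 + 18 * Real.sqrt (Real.log ((k:ℝ)+2))
          ≤ 40 * Real.sqrt (Real.log ((k:ℝ)+2)) := by nlinarith
      calc 6 * (3 + 3 * Real.sqrt (Real.log ((k:ℝ)+2)))
          = 18 + 18 * Real.sqrt (Real.log ((k:ℝ)+2)) := by ring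
        _ ≤ 40 * Real.sqrt (Real.log ((k:ℝ)+2)) := h40
        _ ≤ C * Real.sqrt (Real.log ((k:ℝ)+2)) := by nlinarith
    calc |W s ω| ≤ 6 * B k * Real.sqrt (u k) := h1
      _ = (6 * B k) * Real.sqrt (u k) := by ring
      _ ≤ (C * Real.sqrt (Real.log ((k:ℝ)+2))) * Real.sqrt (u k) :=
          mul_le_mul_of_nonneg_right h3 hsqu
      _ = C * Real.sqrt (u k) * Real.sqrt (Real.log ((k:ℝ)+2)) := by ring
  · have hs2 : s ∈ Set.Icc (0:ℝ) 2 := ⟨hs0, by linarith [hule k, hsk']⟩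
    have h1 : |W s ω| ≤ M := by
      have := hM s hs2
      simpa using this
    have hposK : (0:ℝ) < 2^K := by positivity
    have hinv : ((2:ℝ)^K)⁻¹ ≤ Real.sqrt (u k) := by
      rw [show ((2:ℝ)^K)⁻¹ = Real.sqrt ((((2:ℝ)^K)⁻¹)^2) from (Real.sqrt_sq (by positivity)).symm]
      apply Real.sqrt_le_sqrt
      rw [hu]
      simp only
      have hkK : (2:ℝ)^k ≤ 2^K := pow_le_pow_right₀ one_le_two hk
      have hK1 : (1:ℝ) ≤ 2^K := by
        calc (1:ℝ) = 1^K := (one_pow K).symm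
          _ ≤ 2^K := pow_le_pow_left₀ (by norm_num) (by norm_num) K
      have hinv1 : ((2:ℝ)^K)⁻¹ ≤ 1 := by
        exact inv_le_one_of_one_le₀ hK1
      have hinvpos : (0:ℝ) < ((2:ℝ)^K)⁻¹ := by positivity
      calc (((2:ℝ)^K)⁻¹)^2 ≤ ((2:ℝ)^K)⁻¹ := by nlinarith
        _ ≤ 2/2^k := by
            rw [le_div_iff₀ (by positivity : (0:ℝ) < 2^k)]
            have e : ((2:ℝ)^K)⁻¹ * 2^K = 1 := inv_mul_cancel₀ (ne_of_gt hposK)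
            nlinarith [mul_le_mul_of_nonneg_left hkK hinvpos.le]
    have hL := hsq911 k
    have hCpos : (0:ℝ) ≤ C := by linarith
    have s1 : (M+1) * 2^(K+1) * ((2:ℝ)^K)⁻¹ = 2*(M+1) := by
      rw [pow_succ]
      field_simp
    have s2 : (M+1) * 2^(K+1) * ((2:ℝ)^K)⁻¹ ≤ C * Real.sqrt (u k) :=
      mul_le_mul hCM hinv (by positivity) hCpos
    have s3 : (2*(M+1)) * (9/11:ℝ) ≤ C * Real.sqrt (u k) * Real.sqrt (Real.log ((k:ℝ)+2)) := by
      apply mul_le_mul (le_trans (le_of_eq s1.symm) s2) hL (by norm_num)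
      positivity
    calc |W s ω| ≤ M := h1
      _ ≤ (2*(M+1)) * (9/11:ℝ) := by nlinarith
      _ ≤ C * Real.sqrt (u k) * Real.sqrt (Real.log ((k:ℝ)+2)) := s3

/-- Bounds on `g₁(t) = √(Q₂(t)/t)` and `g₂(t) = -√(Q₁(t)/t) w₂(Q₂(t))/√(Q₂(t))` on
`[v, 1]` with `v = 2δ^{-α}`, on the event `Q₂(v) ≥ δ^{-α}`. -/
theorem g1_g2_bounds {Ω : Type*} [MeasurableSpace Ω] (P : Measure Ω)
    (W₁ W₂ : ℝ → Ω → ℝ) (hW : IndepBMs P W₁ W₂) (α : ℝ) (hα : α ∈ Set.Ioo (1 : ℝ) 2) :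
    (∀ δ : ℝ, 0 < δ → ∀ w₁ w₂ Q₁ Q₂ : ℝ → ℝ,
      IsTwoArmSol w₁ w₂ δ Q₁ Q₂ →
      δ ^ (-α) ≤ Q₂ (2 * δ ^ (-α)) →
      ∀ t ∈ Set.Icc (2 * δ ^ (-α)) 1,
        δ ^ (-α / 2) ≤ Real.sqrt (Q₂ t / t) ∧ Real.sqrt (Q₂ t / t) ≤ 1) ∧
    (∀ᵐ ω ∂P, ∃ C > (0 : ℝ), ∃ δ₀ : ℝ, ∀ δ ≥ δ₀, ∀ Q₁ Q₂ : ℝ → ℝ,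
      IsTwoArmSol (fun x => W₁ x ω) (fun x => W₂ x ω) δ Q₁ Q₂ →
      δ ^ (-α) ≤ Q₂ (2 * δ ^ (-α)) →
      ∀ t ∈ Set.Icc (2 * δ ^ (-α)) 1,
        |(-Real.sqrt (Q₁ t / t)) * (W₂ (Q₂ t) ω / Real.sqrt (Q₂ t))| ≤
          C * Real.sqrt (Real.log (Real.log δ))) := by
  obtain ⟨hα1, hα2⟩ := hα
  constructor
  · -- deterministic part
    rintro δ hδ w₁ w₂ Q₁ Q₂ hsol hQv t ⟨htv, ht1⟩
    obtain ⟨hc1, hc2, hm1, hm2, h10, h20, hsum, hpos1, hpos2, hode⟩ := hsol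
    have hva : 0 < δ ^ (-α) := Real.rpow_pos_of_pos hδ _
    have ht0 : 0 < t := lt_of_lt_of_le (by linarith) htv
    have htI : t ∈ Set.Icc (0:ℝ) 1 := ⟨ht0.le, ht1⟩
    have hvI : 2*δ^(-α) ∈ Set.Icc (0:ℝ) 1 := ⟨by linarith, le_trans htv ht1⟩
    have h0I : (0:ℝ) ∈ Set.Icc (0:ℝ) 1 := ⟨le_refl _, by norm_num⟩
    have hQ2t : δ^(-α) ≤ Q₂ t := le_trans hQv (hm2 hvI htI htv)
    have hQ1t : 0 ≤ Q₁ t := h10 ▸ hm1 h0I htI ht0.le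
    have hQ2le : Q₂ t ≤ t := by
      have := hsum t htI
      linarith
    constructor
    · have h1 : δ^(-α) ≤ Q₂ t / t := by
        rw [le_div_iff₀ ht0]
        calc δ^(-α)*t ≤ δ^(-α)*1 := by nlinarith
          _ ≤ Q₂ t := by linarith
      calc δ^(-α/2) = Real.sqrt (δ^(-α)) := by
            rw [Real.sqrt_eq_rpow, ← Real.rpow_mul hδ.le]
            congr 1
            ring
        _ ≤ Real.sqrt (Q₂ t / t) := Real.sqrt_le_sqrt h1
    · rw [Real.sqrt_le_one, div_le_one ht0]
      exact hQ2le
  · -- probabilistic part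
    obtain ⟨hBM1, hBM2, hind⟩ := hW
    obtain ⟨hcont, h0, hmap, _⟩ := hBM2
    filter_upwards [good_ae hcont h0 hmap] with ω hgood
    obtain ⟨C, hC, hWb⟩ := hgood
    refine ⟨4*C, by positivity, 16, ?_⟩
    intro δ hδ16 Q₁ Q₂ hsol hQv t ⟨htv, ht1⟩
    obtain ⟨hc1, hc2, hm1, hm2, h10, h20, hsum, hpos1, hpos2, hode⟩ := hsol
    have hδ0 : (0:ℝ) < δ := by linarith
    have hva : 0 < δ ^ (-α) := Real.rpow_pos_of_pos hδ0 _
    have ht0 : 0 < t := lt_of_lt_of_le (by linarith) htv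
    have htI : t ∈ Set.Icc (0:ℝ) 1 := ⟨ht0.le, ht1⟩
    have hvI : 2*δ^(-α) ∈ Set.Icc (0:ℝ) 1 := ⟨by linarith, le_trans htv ht1⟩
    have h0I : (0:ℝ) ∈ Set.Icc (0:ℝ) 1 := ⟨le_refl _, by norm_num⟩
    have hQ2t : δ^(-α) ≤ Q₂ t := le_trans hQv (hm2 hvI htI htv)
    have hQ1t : 0 ≤ Q₁ t := h10 ▸ hm1 h0I htI ht0.le
    have hQ2le : Q₂ t ≤ t := by
      have := hsum t htI
      linarith
    set s : ℝ := Q₂ t with hsdef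
    have hs0 : 0 < s := lt_of_lt_of_le hva hQ2t
    have hs1 : s ≤ 1 := le_trans hQ2le ht1
    -- log δ facts
    have hlogδ2 : 2 ≤ Real.log δ := by
      rw [Real.le_log_iff_exp_le hδ0]
      have h1 := Real.exp_one_lt_d9
      have h2 : Real.exp 2 = Real.exp 1 * Real.exp 1 := by
        rw [← Real.exp_add]; norm_num
      nlinarith [Real.exp_pos (1:ℝ)]
    have hlog16 : Real.log 16 ≤ Real.log δ := Real.log_le_log (by norm_num) hδ16
    have hloglog : 1 ≤ Real.log (Real.log δ) := by
      rw [Real.le_log_iff_exp_le (by linarith)]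
      have h1 : Real.log 16 = 4 * Real.log 2 := by
        rw [show (16:ℝ) = 2^4 by norm_num, Real.log_pow]
        push_cast
        ring
      have h2 := Real.log_two_gt_d9
      have h3 := Real.exp_one_lt_d9
      nlinarith
    have hloglogpos : (0:ℝ) < Real.log (Real.log δ) := by linarith
    -- choose k
    set x := Real.logb 2 s⁻¹ with hx
    have hx0 : 0 ≤ x := Real.logb_nonneg one_lt_two ((one_le_inv₀ hs0).mpr hs1)
    set k := ⌊x⌋₊ with hk
    have hk1 : (k:ℝ) ≤ x := Nat.floor_le hx0
    have hk2 : x < k+1 := Nat.lt_floor_add_one x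
    have h2k : (2:ℝ)^k ≤ s⁻¹ := by
      calc (2:ℝ)^k = (2:ℝ)^((k:ℕ):ℝ) := (Real.rpow_natCast 2 k).symm
        _ ≤ (2:ℝ)^x := Real.rpow_le_rpow_of_exponent_le one_le_two hk1
        _ = s⁻¹ := Real.rpow_logb (by norm_num) (by norm_num) (by positivity)
    have h2k1 : s⁻¹ < (2:ℝ)^(k+1) := by
      calc s⁻¹ = (2:ℝ)^x := (Real.rpow_logb (by norm_num) (by norm_num) (by positivity)).symm
        _ < (2:ℝ)^(((k+1:ℕ)):ℝ) := by
            apply Real.rpow_lt_rpow_of_exponent_lt one_lt_two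
            push_cast
            exact hk2
        _ = (2:ℝ)^(k+1) := Real.rpow_natCast 2 (k+1)
    have hs_ub : s ≤ ((2:ℝ)^k)⁻¹ := by
      have h := inv_anti₀ (by positivity : (0:ℝ) < 2^k) h2k
      rwa [inv_inv] at h
    have hs_lb : ((2:ℝ)^(k+1))⁻¹ < s := by
      have h := inv_strictAnti₀ (by positivity : (0:ℝ) < s⁻¹) h2k1
      rwa [inv_inv] at h
    clear_value k x s
    have hsu : s < 2/2^k := by
      apply lt_of_le_of_lt hs_ub
      rw [lt_div_iff₀ (by positivity : (0:ℝ) < 2^k)]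
      rw [inv_mul_cancel₀ (by positivity : ((2:ℝ)^k) ≠ 0)]
      norm_num
    have hWs := hWb k s hs0.le hsu
    -- √(2/2^k) ≤ 2√s
    have hsq1 : Real.sqrt (2/2^k) ≤ 2*Real.sqrt s := by
      have h1 : (2:ℝ)/2^k ≤ 4*s := by
        have e : (2:ℝ)/2^k = 4 * ((2:ℝ)^(k+1))⁻¹ := by
          rw [pow_succ]
          field_simp
          ring
        rw [e]
        linarith only [hs_lb]
      calc Real.sqrt (2/2^k) ≤ Real.sqrt (4*s) := Real.sqrt_le_sqrt h1
        _ = 2*Real.sqrt s := by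
            rw [show (4:ℝ)*s = 2^2*s by norm_num, Real.sqrt_mul (by positivity),
              Real.sqrt_sq (by norm_num : (0:ℝ) ≤ 2)]
    -- k ≤ 3 log δ
    have hk3 : (k:ℝ) ≤ 3*Real.log δ := by
      have hsinv : s⁻¹ ≤ δ^α := by
        have h1 : δ^(-α) = (δ^α)⁻¹ := Real.rpow_neg hδ0.le α
        have h2 : s⁻¹ ≤ (δ^(-α))⁻¹ := by
          apply inv_anti₀ hva hQ2t
        rwa [h1, inv_inv] at h2
      have h5 : x ≤ Real.logb 2 (δ^α) := by
        rw [hx]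
        exact Real.logb_le_logb_of_le one_lt_two (by positivity) hsinv
      have h6 : Real.logb 2 (δ^α) = α * Real.log δ / Real.log 2 := by
        rw [Real.logb, Real.log_rpow hδ0]
      have hlog2 := Real.log_two_gt_d9
      rw [h6] at h5
      have h7 : α * Real.log δ / Real.log 2 ≤ 3 * Real.log δ := by
        rw [div_le_iff₀ (by linarith : (0:ℝ) < Real.log 2)]
        have h8 : α * Real.log δ ≤ 2 * Real.log δ :=
          mul_le_mul_of_nonneg_right (le_of_lt hα2) (by linarith)
        have h9 : 2 * Real.log δ ≤ (3 * Real.log 2) * Real.log δ :=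
          mul_le_mul_of_nonneg_right (by linarith only [hlog2]) (by linarith only [hlogδ2])
        have h10 : (3 * Real.log 2) * Real.log δ = 3 * Real.log δ * Real.log 2 := by ring
        linarith only [h8, h9, h10]
      linarith only [hk1, h5, h7]
    have hk4 : (k:ℝ)+2 ≤ 4*Real.log δ := by linarith only [hk3, hlogδ2]
    have hlogk : Real.log ((k:ℝ)+2) ≤ 3*Real.log (Real.log δ) := by
      have hkpos : (0:ℝ) < (k:ℝ)+2 := by positivity
      calc Real.log ((k:ℝ)+2) ≤ Real.log (4*Real.log δ) := Real.log_le_log hkpos hk4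
        _ = Real.log 4 + Real.log (Real.log δ) := Real.log_mul (by norm_num) (by linarith)
        _ ≤ 3*Real.log (Real.log δ) := by
            have h4 : Real.log 4 ≤ 2 := by
              rw [show (4:ℝ)=2^2 by norm_num, Real.log_pow]
              push_cast
              nlinarith [Real.log_two_lt_d9]
            linarith
    have hsqk : Real.sqrt (Real.log ((k:ℝ)+2)) ≤ 2*Real.sqrt (Real.log (Real.log δ)) := by
      calc Real.sqrt (Real.log ((k:ℝ)+2)) ≤ Real.sqrt (4*Real.log (Real.log δ)) := by
            apply Real.sqrt_le_sqrt
            linarith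
        _ = 2*Real.sqrt (Real.log (Real.log δ)) := by
            rw [show (4:ℝ)*Real.log (Real.log δ) = 2^2*Real.log (Real.log δ) by norm_num,
              Real.sqrt_mul (by positivity), Real.sqrt_sq (by norm_num : (0:ℝ) ≤ 2)]
    -- combine
    have hfinal : |W₂ s ω| ≤ 4*C*Real.sqrt (Real.log (Real.log δ)) * Real.sqrt s := by
      calc |W₂ s ω| ≤ C * Real.sqrt (2/2^k) * Real.sqrt (Real.log ((k:ℝ)+2)) := hWs
        _ ≤ C * (2*Real.sqrt s) * (2*Real.sqrt (Real.log (Real.log δ))) := by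
            apply mul_le_mul
            · exact mul_le_mul_of_nonneg_left hsq1 hC.le
            · exact hsqk
            · positivity
            · positivity
        _ = 4*C*Real.sqrt (Real.log (Real.log δ)) * Real.sqrt s := by ring
    have hQ1div : Real.sqrt (Q₁ t / t) ≤ 1 := by
      rw [Real.sqrt_le_one, div_le_one ht0]
      have := hsum t htI
      linarith
    have hsqs : 0 < Real.sqrt s := Real.sqrt_pos.mpr hs0
    calc |(-Real.sqrt (Q₁ t/t)) * (W₂ s ω / Real.sqrt s)|
        = Real.sqrt (Q₁ t/t) * (|W₂ s ω| / Real.sqrt s) := by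
          rw [abs_mul, abs_neg, abs_of_nonneg (Real.sqrt_nonneg _), abs_div,
            abs_of_nonneg (Real.sqrt_nonneg _)]
      _ ≤ 1 * (4*C*Real.sqrt (Real.log (Real.log δ))) := by
          apply mul_le_mul hQ1div _ (by positivity) (by norm_num)
          rw [div_le_iff₀ hsqs]
          calc |W₂ s ω| ≤ 4*C*Real.sqrt (Real.log (Real.log δ)) * Real.sqrt s := hfinal
            _ = 4*C*Real.sqrt (Real.log (Real.log δ)) * Real.sqrt s := rfl
      _ = 4*C*Real.sqrt (Real.log (Real.log δ)) := one_mul _
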